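/- arXiv:1501.01668 — 7 statements merged into one kernel-verified Lean document; each statement's English description precedes it below -/
import Mathlib

section
/- The handoff rate for a user moving radially away from its serving AP in a PPP network of density λ, defined as H(v, λ) = 1 − ∫₀^∞ exp(−λπ((r+v)² − r²))·2πλr·exp(−πλr²) dr, equals 1 − (exp(−λπv²) − 2vπ√λ·Q(v√(2πλ))). -/
open Real MeasureTheory Set Filter

lemma integral_Ioi_add_right' (g : ℝ → ℝ) (a v : ℝ) :
    ∫ x in Set.Ioi a, g (x + v) = ∫ x in Set.Ioi (a + v), g x := by
  rw [← integral_indicator measurableSet_Ioi, ← integral_indicator measurableSet_Ioi,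
    ← integral_add_right_eq_self (Set.indicator (Set.Ioi (a + v)) g) v]
  congr 1
  ext x
  simp only [Set.indicator_apply, Set.mem_Ioi, add_lt_add_iff_right]

theorem stmt3 (lam v : ℝ) (hlam : 0 < lam) (hv : 0 ≤ v)
    (Q : ℝ → ℝ)
    (hQ : ∀ x, Q x = (Real.sqrt (2*π))⁻¹ * ∫ t in Set.Ioi x, Real.exp (-t^2/2))
    (H : ℝ)
    (hH : H = 1 - ∫ r in Set.Ioi (0:ℝ),
        Real.exp (-(lam*π*((r+v)^2 - r^2))) * (2*π*lam*r) * Real.exp (-(π*lam*r^2))) :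
    H = 1 - (Real.exp (-(lam*π*v^2)) - 2*v*π*Real.sqrt lam * Q (v*Real.sqrt (2*π*lam))) := by
  have hpi := Real.pi_pos
  set a : ℝ := π * lam with ha_def
  have ha : 0 < a := by positivity
  set b : ℝ := Real.sqrt (2*π*lam) with hb_def
  have hb : 0 < b := Real.sqrt_pos.mpr (by positivity)
  have hb2 : b ^ 2 = 2*π*lam := Real.sq_sqrt (by positivity)
  -- rewrite the integrand
  have hint : ∀ r : ℝ,
      Real.exp (-(lam*π*((r+v)^2 - r^2))) * (2*π*lam*r) * Real.exp (-(π*lam*r^2))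
        = (2*π*lam*r) * Real.exp (-a*(r+v)^2) := by
    intro r
    have : Real.exp (-(lam*π*((r+v)^2 - r^2))) * Real.exp (-(π*lam*r^2))
        = Real.exp (-a*(r+v)^2) := by
      rw [← Real.exp_add]; congr 1; rw [ha_def]; ring
    calc Real.exp (-(lam*π*((r+v)^2 - r^2))) * (2*π*lam*r) * Real.exp (-(π*lam*r^2))
        = (2*π*lam*r) * (Real.exp (-(lam*π*((r+v)^2 - r^2))) * Real.exp (-(π*lam*r^2))) := by ring
      _ = (2*π*lam*r) * Real.exp (-a*(r+v)^2) := by rw [this]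
  -- integrability
  have hIexp : IntegrableOn (fun s => Real.exp (-a*s^2)) (Set.Ioi v) :=
    (integrable_exp_neg_mul_sq ha).integrableOn
  have hIsexp : IntegrableOn (fun s => s * Real.exp (-a*s^2)) (Set.Ioi v) :=
    (integrable_mul_exp_neg_mul_sq ha).integrableOn
  -- FTC: ∫ s in Ioi v, 2*a*s*exp(-a s^2) = exp(-a v^2)
  have hFTC : ∫ s in Set.Ioi v, 2*a*s * Real.exp (-a*s^2) = Real.exp (-a*v^2) := by
    have hderiv : ∀ x ∈ Set.Ici v, HasDerivAt (fun s => -Real.exp (-a*s^2))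
        (2*a*x * Real.exp (-a*x^2)) x := by
      intro x _
      have h1 : HasDerivAt (fun s : ℝ => -a*s^2) (-a*(2*x)) x := by
        simpa using ((hasDerivAt_pow 2 x).const_mul (-a))
      have h2 := (h1.exp).fun_neg
      refine h2.congr_deriv ?_
      ring
    have htend : Tendsto (fun s => -Real.exp (-a*s^2)) atTop (nhds 0) := by
      have h1 : Tendsto (fun s : ℝ => -a*s^2) atTop atBot := by
        have h : Tendsto (fun s : ℝ => a*s^2) atTop atTop :=
          (tendsto_pow_atTop (two_ne_zero)).const_mul_atTop ha
        have := tendsto_neg_atTop_atBot.comp h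
        simpa only [Function.comp_def, neg_mul] using this
      have := (Real.tendsto_exp_atBot).comp h1
      simpa using this.neg
    have hint' : IntegrableOn (fun s => 2*a*s * Real.exp (-a*s^2)) (Set.Ioi v) := by
      have := hIsexp.const_mul (2*a)
      simpa [mul_assoc, IntegrableOn] using this
    have := integral_Ioi_of_hasDerivAt_of_tendsto' hderiv hint' htend
    rw [this]; ring
  -- change of variables for Q
  have hQv : ∫ s in Set.Ioi v, Real.exp (-a*s^2)
      = b⁻¹ * (Real.sqrt (2*π) * Q (v*b)) := by
    rw [hQ]
    have hcv := integral_comp_mul_right_Ioi (fun t => Real.exp (-t^2/2)) v hb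
    have heq : ∀ s : ℝ, Real.exp (-(s*b)^2/2) = Real.exp (-a*s^2) := by
      intro s; congr 1; rw [mul_pow, hb2, ha_def]; ring
    rw [show (fun s => Real.exp (-a*s^2)) = (fun s => Real.exp (-(s*b)^2/2)) from
      funext fun s => (heq s).symm] at *
    rw [hcv, smul_eq_mul]
    have hs2 : Real.sqrt (2*π) ≠ 0 := by positivity
    field_simp
  -- shift the main integral
  have hshift : ∫ r in Set.Ioi (0:ℝ), (2*π*lam*r) * Real.exp (-a*(r+v)^2)
      = ∫ s in Set.Ioi v, (2*π*lam*(s-v)) * Real.exp (-a*s^2) := by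
    have := integral_Ioi_add_right' (fun s => (2*π*lam*(s-v)) * Real.exp (-a*s^2)) 0 v
    simp only [zero_add, add_sub_cancel_right] at this
    exact this
  -- split
  have hsplit : ∫ s in Set.Ioi v, (2*π*lam*(s-v)) * Real.exp (-a*s^2)
      = (∫ s in Set.Ioi v, 2*a*s * Real.exp (-a*s^2))
        - (2*a*v) * ∫ s in Set.Ioi v, Real.exp (-a*s^2) := by
    rw [← MeasureTheory.integral_const_mul, ← integral_sub]
    · apply setIntegral_congr_fun measurableSet_Ioi
      intro s _
      simp only [ha_def]; ring
    · have := hIsexp.const_mul (2*a)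
      simpa [mul_assoc] using this
    · exact hIexp.const_mul (2*a*v)
  -- put it together
  rw [hH]
  congr 1
  have hIcongr : ∫ r in Set.Ioi (0:ℝ),
      Real.exp (-(lam*π*((r+v)^2 - r^2))) * (2*π*lam*r) * Real.exp (-(π*lam*r^2))
      = ∫ r in Set.Ioi (0:ℝ), (2*π*lam*r) * Real.exp (-a*(r+v)^2) :=
    setIntegral_congr_fun measurableSet_Ioi (fun r _ => hint r)
  rw [hIcongr, hshift, hsplit, hFTC, hQv]
  have hsqrt_mul : b = Real.sqrt (2*π) * Real.sqrt lam := by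
    rw [hb_def, ← Real.sqrt_mul (by positivity)]
  have hslam : Real.sqrt lam ≠ 0 := by positivity
  have hs2 : Real.sqrt (2*π) ≠ 0 := by positivity
  have hlam_sqrt : lam = Real.sqrt lam * Real.sqrt lam := (Real.mul_self_sqrt hlam.le).symm
  have hbinv : b⁻¹ * Real.sqrt (2*π) = (Real.sqrt lam)⁻¹ := by
    rw [hsqrt_mul, mul_inv]
    field_simp
  have h2 : lam * (Real.sqrt lam)⁻¹ = Real.sqrt lam := by
    field_simp
    rw [Real.sq_sqrt hlam.le]
  have h1 : (2*a*v) * (b⁻¹ * (Real.sqrt (2*π) * Q (v*b))) = 2*v*π*Real.sqrt lam * Q (v*b) := by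
    calc (2*a*v) * (b⁻¹ * (Real.sqrt (2*π) * Q (v*b)))
        = 2*v*π*(lam * (b⁻¹ * Real.sqrt (2*π))) * Q (v*b) := by rw [ha_def]; ring
      _ = 2*v*π*(lam * (Real.sqrt lam)⁻¹) * Q (v*b) := by rw [hbinv]
      _ = 2*v*π*Real.sqrt lam * Q (v*b) := by rw [h2]
  rw [h1]
  congr 2
  · rw [ha_def]; ring
end

section
/- For λ > 0, v ≥ 0, c > 0 and a ≥ 0, the integral ∫₀^∞ exp(−λπc(r + a)² + λπc·a²)·2πλr dr equals (1/c)·(1 − 2b√π·e^{b²}·Q(√2·b)), where b = a·√(πλc) and Q is the Gaussian tail function. -/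
open Real MeasureTheory Set

private lemma shiftIoi (f : ℝ → ℝ) (a c : ℝ) :
    ∫ x in Ioi c, f (x + a) = ∫ x in Ioi (c + a), f x := by
  rw [← integral_indicator measurableSet_Ioi, ← integral_indicator measurableSet_Ioi,
    ← integral_add_right_eq_self (Set.indicator (Ioi (c+a)) f) a]
  congr 1; ext x; simp [Set.indicator_apply, mem_Ioi]

theorem stmt4 (lam v c a : ℝ) (hlam : 0 < lam) (hv : 0 ≤ v) (hc : 0 < c) (ha : 0 ≤ a)
    (Q : ℝ → ℝ)
    (hQ : ∀ x, Q x = (Real.sqrt (2*π))⁻¹ * ∫ t in Set.Ioi x, Real.exp (-t^2/2))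
    (b : ℝ) (hb : b = a * Real.sqrt (π*lam*c)) :
    (∫ r in Set.Ioi (0:ℝ), Real.exp (-(lam*π*c*(r+a)^2) + lam*π*c*a^2) * (2*π*lam*r))
      = (1/c) * (1 - 2*b*Real.sqrt π * Real.exp (b^2) * Q (Real.sqrt 2 * b)) := by
  have hπ := Real.pi_pos
  set k : ℝ := lam*π*c with hk_def
  have hk : 0 < k := by positivity
  set B : ℝ := ∫ r in Ioi (0:ℝ), Real.exp (-(k*(r+a)^2)) with hB_def
  have hBint : IntegrableOn (fun r => Real.exp (-(k*(r+a)^2))) (Ioi 0) := by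
    have := (integrable_exp_neg_mul_sq hk).comp_add_right a
    simpa using this.integrableOn
  have hderiv : ∀ r : ℝ, HasDerivAt (fun r : ℝ => -(2*k)⁻¹ * Real.exp (-(k*(r+a)^2)))
      ((r+a) * Real.exp (-(k*(r+a)^2))) r := by
    intro r
    have h1 : HasDerivAt (fun r : ℝ => -(k*(r+a)^2)) (-(k*(2*(r+a)))) r := by
      have := (((hasDerivAt_id r).add_const a).pow 2).const_mul k
      have h := this.neg; simp at h; exact h
    have := (h1.exp).const_mul (-(2*k)⁻¹)
    refine this.congr_deriv ?_
    rw [show -(2*k)⁻¹ * (Real.exp (-(k*(r+a)^2)) * -(k*(2*(r+a)))) = ((2*k)⁻¹ * (2*k)) * ((r+a) * Real.exp (-(k*(r+a)^2))) by ring, inv_mul_cancel₀ (by positivity), one_mul]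
  have htend : Filter.Tendsto (fun r : ℝ => -(2*k)⁻¹ * Real.exp (-(k*(r+a)^2)))
      Filter.atTop (nhds 0) := by
    rw [show (0:ℝ) = -(2*k)⁻¹ * 0 by ring]
    refine Filter.Tendsto.const_mul _ ?_
    apply Real.tendsto_exp_atBot.comp
    apply Filter.tendsto_neg_atBot_iff.mpr
    apply Filter.Tendsto.const_mul_atTop hk
    exact (Filter.tendsto_pow_atTop two_ne_zero).comp (Filter.tendsto_atTop_add_const_right _ a Filter.tendsto_id)
  have hnn : ∀ x ∈ Ioi (0:ℝ), 0 ≤ (x+a) * Real.exp (-(k*(x+a)^2)) := by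
    intro x hx
    have : (0:ℝ) < x := hx
    exact mul_nonneg (by linarith) (Real.exp_pos _).le
  have hA : ∫ r in Ioi (0:ℝ), (r+a) * Real.exp (-(k*(r+a)^2))
      = Real.exp (-(k*a^2)) / (2*k) := by
    have := integral_Ioi_of_hasDerivAt_of_nonneg
      ((hderiv 0).continuousAt.continuousWithinAt) (fun x _ => hderiv x) hnn htend
    rw [this]
    rw [zero_add]
    field_simp
    ring
  have hAint : IntegrableOn (fun r => (r+a) * Real.exp (-(k*(r+a)^2))) (Ioi 0) :=
    integrableOn_Ioi_deriv_of_nonneg ((hderiv 0).continuousAt.continuousWithinAt)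
      (fun x _ => hderiv x) hnn htend
  have hb' : b = a * Real.sqrt k := by
    rw [hb, hk_def]; ring_nf
  have hb2 : b^2 = k * a^2 := by
    rw [hb', mul_pow, Real.sq_sqrt hk.le]; ring
  have hsq : (0:ℝ) < Real.sqrt (2*k) := Real.sqrt_pos.mpr (by positivity)
  -- relate Q to B
  have hQB : Q (Real.sqrt 2 * b) = (Real.sqrt (2*π))⁻¹ * (Real.sqrt (2*k) * B) := by
    rw [hQ]
    congr 1
    have hbval : Real.sqrt 2 * b = Real.sqrt (2*k) * a := by
      rw [hb', Real.sqrt_mul (by norm_num) k]; ring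
    rw [hbval]
    have hcml := integral_comp_mul_left_Ioi (fun t => Real.exp (-t^2/2)) a hsq
    rw [smul_eq_mul] at hcml
    have heq : ∀ x : ℝ, Real.exp (-(Real.sqrt (2*k) * x)^2/2) = Real.exp (-(k*x^2)) := by
      intro x
      congr 1
      rw [mul_pow, Real.sq_sqrt (by positivity : (0:ℝ) ≤ 2*k)]
      ring
    have h2 : (∫ x in Ioi a, Real.exp (-(k*x^2))) = B := by
      rw [hB_def]
      have := shiftIoi (fun x => Real.exp (-(k*x^2))) a 0
      simpa using this.symm
    calc ∫ t in Ioi (Real.sqrt (2*k) * a), Real.exp (-t^2/2)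
        = Real.sqrt (2*k) * ∫ x in Ioi a, Real.exp (-(Real.sqrt (2*k)*x)^2/2) := by
          rw [hcml]; field_simp
      _ = Real.sqrt (2*k) * ∫ x in Ioi a, Real.exp (-(k*x^2)) := by
          congr 1; exact setIntegral_congr_fun measurableSet_Ioi (fun x _ => heq x)
      _ = Real.sqrt (2*k) * B := by rw [h2]
  -- split the main integral
  have hsplit : (∫ r in Set.Ioi (0:ℝ), Real.exp (-(lam*π*c*(r+a)^2) + lam*π*c*a^2) * (2*π*lam*r))
      = (2*π*lam*Real.exp (k*a^2)) *
        ((∫ r in Ioi (0:ℝ), (r+a) * Real.exp (-(k*(r+a)^2))) - a * B) := by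
    have e1 : (∫ r in Ioi (0:ℝ), (r+a) * Real.exp (-(k*(r+a)^2))) - a*B
        = ∫ r in Ioi (0:ℝ), ((r+a) * Real.exp (-(k*(r+a)^2)) - a * Real.exp (-(k*(r+a)^2))) := by
      rw [hB_def, ← integral_const_mul]
      exact (MeasureTheory.integral_sub hAint (hBint.const_mul a)).symm
    rw [e1, ← integral_const_mul]
    refine setIntegral_congr_fun measurableSet_Ioi (fun r _ => ?_)
    rw [← hk_def, Real.exp_add]
    ring
  rw [hsplit, hA, hQB]
  -- final algebra
  have hkk : Real.sqrt k * Real.sqrt k = k := Real.mul_self_sqrt hk.le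
  have h2k : Real.sqrt (2*k) = Real.sqrt 2 * Real.sqrt k := Real.sqrt_mul (by norm_num) k
  have h2π : Real.sqrt (2*π) = Real.sqrt 2 * Real.sqrt π := Real.sqrt_mul (by norm_num) π
  have hs2 : Real.sqrt 2 ≠ 0 := by positivity
  have hsπ : Real.sqrt π ≠ 0 := by positivity
  have hsk : Real.sqrt k ≠ 0 := by positivity
  rw [hb']
  have hask : (a * Real.sqrt k)^2 = k * a^2 := by
    rw [mul_pow, Real.sq_sqrt hk.le]; ring
  rw [hask, h2k, h2π, Real.exp_neg]
  have hE : Real.exp (k*a^2) ≠ 0 := Real.exp_ne_zero _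
  rw [hk_def] at hkk ⊢
  field_simp
  have h1 : Real.sqrt π ^ 2 = π := Real.sq_sqrt hπ.le
  have h2 : Real.sqrt lam ^ 2 = lam := Real.sq_sqrt hlam.le
  have h3 : Real.sqrt c ^ 2 = c := Real.sq_sqrt hc.le
  have h4 : Real.sqrt (π*lam*c) ^ 2 = π*lam*c := Real.sq_sqrt (by positivity)
  ring_nf
  linear_combination 2*a*Real.exp (π*lam*c*a^2)*B*h4
end

section
/- The approximate handoff rate H(v, λ) = 1 − (1/π)∫₀^π ∫₀^∞ 2πλr·exp(−λ(v²(π−θ) + rv·a(θ)) − πλr²) dr dθ equals 1 − (1/π)∫₀^π [1 − 2b(θ)√π·e^{b(θ)²}·Q(√2·b(θ))]·exp(−λv²(π−θ)) dθ, where b(θ) = √(πλ)·v·a(θ)/(2π) and a(θ) = 2cos θ(π−θ) + sin θ. -/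
set_option maxHeartbeats 1000000

open Real MeasureTheory Set Filter Topology

lemma aux_tail_mul (b : ℝ) :
    ∫ t in Set.Ioi b, t * Real.exp (-t^2) = Real.exp (-b^2) / 2 := by
  have hderiv : ∀ x ∈ Set.Ici b, HasDerivAt (fun u : ℝ => -Real.exp (-u^2) / 2)
      (x * Real.exp (-x^2)) x := by
    intro x _
    have h1 : HasDerivAt (fun u : ℝ => -u^2) (-(2*x)) x := by
      exact HasDerivAt.congr_deriv (f := fun u : ℝ => -u^2) ((hasDerivAt_pow 2 x).neg) (by norm_num)
    have h2 : HasDerivAt (fun u : ℝ => Real.exp (-u^2)) (Real.exp (-x^2) * (-(2*x))) x :=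
      (Real.hasDerivAt_exp _).comp x h1
    have := (h2.neg).div_const 2
    exact this.congr_deriv (by ring)
  have hint : IntegrableOn (fun t : ℝ => t * Real.exp (-t^2)) (Set.Ioi b) := by
    have := integrable_mul_exp_neg_mul_sq (b := 1) one_pos
    simpa [neg_one_mul] using this.integrableOn
  have htend : Tendsto (fun u : ℝ => -Real.exp (-u^2) / 2) atTop (𝓝 0) := by
    have h1 : Tendsto (fun u : ℝ => -u^2) atTop atBot := by
      have h0 : Tendsto (fun u : ℝ => u^2) atTop atTop := tendsto_pow_atTop two_ne_zero
      exact tendsto_neg_atBot_iff.mpr h0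
    have h2 : Tendsto (fun u : ℝ => Real.exp (-u^2)) atTop (𝓝 0) :=
      Real.tendsto_exp_atBot.comp h1
    have := (h2.neg).div_const 2
    simpa using this
  have := integral_Ioi_of_hasDerivAt_of_tendsto' hderiv hint htend
  rw [this]; ring

lemma aux_key (α c s b : ℝ) (hs : 0 < s) (hs2 : s^2 = α) (hcb : 2*s*b = c) :
    ∫ r in Set.Ioi (0:ℝ), 2*α*r * Real.exp (-(c*r) - α*r^2)
      = 1 - 2*b*Real.exp (b^2) * ∫ t in Set.Ioi b, Real.exp (-t^2) := by
  set g : ℝ → ℝ := fun t => 2*(t-b)*Real.exp (b^2)*Real.exp (-t^2) with hg_def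
  have g_int : Integrable g := by
    have h1 : Integrable (fun t : ℝ => t * Real.exp (-1*t^2)) :=
      integrable_mul_exp_neg_mul_sq one_pos
    have h2 : Integrable (fun t : ℝ => Real.exp (-1*t^2)) :=
      integrable_exp_neg_mul_sq one_pos
    have := (h1.const_mul (2*Real.exp (b^2))).sub (h2.const_mul (2*b*Real.exp (b^2)))
    refine this.congr (Filter.Eventually.of_forall fun t => ?_)
    simp only [hg_def, Pi.sub_apply, neg_one_mul]
    ring
  have hpt : ∀ r : ℝ, 2*α*r * Real.exp (-(c*r) - α*r^2) = g (s*r + b) * s := by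
    intro r
    have hexp : -(c*r) - α*r^2 = b^2 + (-(s*r+b)^2) := by
      rw [← hcb, ← hs2]; ring
    rw [hexp, Real.exp_add]
    simp only [hg_def]
    rw [← hs2]; ring
  have hsub : ∫ r in Set.Ioi (0:ℝ), 2*α*r * Real.exp (-(c*r) - α*r^2)
      = ∫ u in Set.Ioi b, g u := by
    have hf_cont : ContinuousOn (fun x : ℝ => s*x + b) (Set.Ici 0) :=
      ((continuous_const.mul continuous_id).add continuous_const).continuousOn
    have hft : Tendsto (fun x : ℝ => s*x + b) atTop atTop :=
      tendsto_atTop_add_const_right _ b (tendsto_id.const_mul_atTop hs)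
    have hff' : ∀ x ∈ Set.Ioi (0:ℝ), HasDerivWithinAt (fun x : ℝ => s*x + b) s (Set.Ioi x) x := by
      intro x _
      have : HasDerivAt (fun x : ℝ => s*x + b) s x := by
        simpa using ((hasDerivAt_id x).const_mul s).add_const b
      exact this.hasDerivWithinAt
    have hg_cont : ContinuousOn g ((fun x : ℝ => s*x + b) '' Set.Ioi 0) := by
      apply Continuous.continuousOn
      simp only [hg_def]
      fun_prop
    have hg1 : IntegrableOn g ((fun x : ℝ => s*x + b) '' Set.Ici 0) := g_int.integrableOn
    have hg2 : IntegrableOn (fun x : ℝ => (g ∘ (fun x : ℝ => s*x + b)) x * s) (Set.Ici 0) := by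
      have h1 : Integrable (fun u : ℝ => g (u + b)) := g_int.comp_add_right b
      have h2 : Integrable (fun x : ℝ => g (s*x + b)) :=
        (integrable_comp_mul_left_iff (fun u : ℝ => g (u + b)) hs.ne').2 h1
      exact (h2.mul_const s).integrableOn
    have := integral_comp_mul_deriv_Ioi hf_cont hft hff' hg_cont hg1 hg2
    simp only [Function.comp, mul_zero, zero_add] at this
    rw [← this]
    exact setIntegral_congr_fun measurableSet_Ioi fun r _ => hpt r
  rw [hsub]
  have hsplit : ∫ u in Set.Ioi b, g u
      = (2*Real.exp (b^2)) * (∫ u in Set.Ioi b, u * Real.exp (-u^2))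
        - (2*b*Real.exp (b^2)) * ∫ u in Set.Ioi b, Real.exp (-u^2) := by
    have i1 : IntegrableOn (fun u : ℝ => u * Real.exp (-u^2)) (Set.Ioi b) := by
      have := integrable_mul_exp_neg_mul_sq (b := 1) one_pos
      simpa [neg_one_mul] using this.integrableOn
    have i2 : IntegrableOn (fun u : ℝ => Real.exp (-u^2)) (Set.Ioi b) := by
      have := integrable_exp_neg_mul_sq (b := 1) one_pos
      simpa [neg_one_mul] using this.integrableOn
    have e0 : ∫ u in Set.Ioi b, g u
        = ∫ u in Set.Ioi b, ((2*Real.exp (b^2)) * (u * Real.exp (-u^2))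
            - (2*b*Real.exp (b^2)) * Real.exp (-u^2)) :=
      setIntegral_congr_fun measurableSet_Ioi fun u _ => by
        simp only [hg_def]; ring
    rw [e0, integral_sub (i1.const_mul _) (i2.const_mul _),
      integral_const_mul, integral_const_mul]
  rw [hsplit, aux_tail_mul]
  have : Real.exp (b^2) * Real.exp (-b^2) = 1 := by
    rw [← Real.exp_add]; simp
  nlinarith [this]

lemma aux_Q (x : ℝ) :
    Real.sqrt 2 * ∫ t in Set.Ioi x, Real.exp (-t^2)
      = ∫ t in Set.Ioi (Real.sqrt 2 * x), Real.exp (-t^2/2) := by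
  have h2 : (0:ℝ) < Real.sqrt 2 := by positivity
  have := integral_comp_mul_left_Ioi (fun t : ℝ => Real.exp (-t^2/2)) x h2
  have heq : ∀ r : ℝ, Real.exp (-(Real.sqrt 2 * r)^2/2) = Real.exp (-r^2) := by
    intro r
    congr 1
    have : Real.sqrt 2 ^ 2 = 2 := Real.sq_sqrt (by norm_num)
    nlinarith [this]
  rw [show (∫ r in Set.Ioi x, (fun t : ℝ => Real.exp (-t^2/2)) (Real.sqrt 2 * r))
      = ∫ r in Set.Ioi x, Real.exp (-r^2) from
    setIntegral_congr_fun measurableSet_Ioi fun r _ => heq r] at this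
  rw [smul_eq_mul] at this
  rw [this, ← mul_assoc, mul_inv_cancel₀ h2.ne', one_mul]

theorem stmt6 (lam v : ℝ) (hlam : 0 < lam) (hv : 0 ≤ v)
    (Q : ℝ → ℝ)
    (hQ : ∀ x, Q x = (Real.sqrt (2*π))⁻¹ * ∫ t in Set.Ioi x, Real.exp (-t^2/2))
    (a : ℝ → ℝ) (ha : ∀ θ, a θ = 2*Real.cos θ*(π - θ) + Real.sin θ)
    (b : ℝ → ℝ) (hb : ∀ θ, b θ = Real.sqrt (π*lam) * (v * a θ) / (2*π)) :
    1 - (1/π) * ∫ θ in (0:ℝ)..π, (∫ r in Set.Ioi (0:ℝ),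
          (2*π*lam*r) * Real.exp (-(lam*(v^2*(π - θ) + r*v*(a θ))) - π*lam*r^2))
      = 1 - (1/π) * ∫ θ in (0:ℝ)..π,
          (1 - 2*(b θ)*Real.sqrt π * Real.exp ((b θ)^2) * Q (Real.sqrt 2 * b θ))
            * Real.exp (-(lam*v^2*(π - θ))) := by
  have hπ : (0:ℝ) < π := Real.pi_pos
  have hs : (0:ℝ) < Real.sqrt (π*lam) := Real.sqrt_pos.mpr (by positivity)
  have hs2 : Real.sqrt (π*lam) ^ 2 = π*lam := Real.sq_sqrt (by positivity)
  congr 2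
  apply intervalIntegral.integral_congr
  intro θ _
  simp only
  set s := Real.sqrt (π*lam) with hs_def
  have hcb : 2*s*(b θ) = lam*v*(a θ) := by
    rw [hb θ]
    field_simp
    linear_combination (v*(a θ))*hs2
  -- pull out the constant exp factor
  have hptθ : ∀ r : ℝ, (2*π*lam*r) * Real.exp (-(lam*(v^2*(π - θ) + r*v*(a θ))) - π*lam*r^2)
      = Real.exp (-(lam*v^2*(π - θ))) * (2*(π*lam)*r * Real.exp (-((lam*v*(a θ))*r) - (π*lam)*r^2)) := by
    intro r
    rw [show (-(lam*(v^2*(π - θ) + r*v*(a θ))) - π*lam*r^2)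
        = (-(lam*v^2*(π - θ))) + (-((lam*v*(a θ))*r) - (π*lam)*r^2) by ring, Real.exp_add]
    ring
  rw [show (∫ r in Set.Ioi (0:ℝ),
        (2*π*lam*r) * Real.exp (-(lam*(v^2*(π - θ) + r*v*(a θ))) - π*lam*r^2))
      = ∫ r in Set.Ioi (0:ℝ), Real.exp (-(lam*v^2*(π - θ)))
          * (2*(π*lam)*r * Real.exp (-((lam*v*(a θ))*r) - (π*lam)*r^2)) from
    setIntegral_congr_fun measurableSet_Ioi fun r _ => hptθ r]
  rw [integral_const_mul]
  rw [aux_key (π*lam) (lam*v*(a θ)) s (b θ) hs hs2 hcb]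
  -- now rewrite Q
  have hQval : Real.sqrt π * Q (Real.sqrt 2 * b θ) = ∫ t in Set.Ioi (b θ), Real.exp (-t^2) := by
    rw [hQ, ← aux_Q (b θ)]
    have h2π : Real.sqrt (2*π) = Real.sqrt 2 * Real.sqrt π := Real.sqrt_mul (by norm_num) π
    rw [h2π]
    have h2 : (0:ℝ) < Real.sqrt 2 := by positivity
    have hps : (0:ℝ) < Real.sqrt π := Real.sqrt_pos.mpr hπ
    field_simp
  rw [show (1 - 2*(b θ)*Real.sqrt π * Real.exp ((b θ)^2) * Q (Real.sqrt 2 * b θ))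
      = (1 - 2*(b θ)*Real.exp ((b θ)^2) * (Real.sqrt π * Q (Real.sqrt 2 * b θ))) by ring,
    hQval]
  ring
end

section
/- The single-tier coverage probability with handoff cost, P_c(v,λ,β,τ,α) = (1−β)/(1+ρ) + β·(1/π)∫₀^π ∫₀^∞ e^{−πλr²ρ}·e^{−λ(v²(π−θ)+rva(θ))}·2πλr·e^{−πλr²} dr dθ, equals (1/(1+ρ))·{(1−β) + β·(1/π)∫₀^π [1 − 2b'√π·e^{b'²}·Q(√2 b')]·e^{−λv²(π−θ)} dθ}, where b' = (va(θ)/(2π))·√(πλ/(1+ρ)). -/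
open Real MeasureTheory

section Aux

open Set Filter Topology

private lemma my_transl (g : ℝ → ℝ) (a d : ℝ) :
    ∫ x in Ioi a, g (x + d) = ∫ x in Ioi (a + d), g x := by
  have h := (measurePreserving_add_right (volume : Measure ℝ) d).setIntegral_preimage_emb
    (measurableEmbedding_addRight d) g (Ioi (a + d))
  rw [show (fun x => x + d) ⁻¹' Ioi (a + d) = Ioi a by rw [preimage_add_const_Ioi]; ring_nf]
    at h
  exact h

private lemma my_int_mul (c : ℝ) (hc : 0 < c) :
    Integrable (fun u : ℝ => u * Real.exp (-(c*u^2))) := by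
  have h : (fun u : ℝ => u * Real.exp (-(c*u^2))) = fun u => u * Real.exp (-c*u^2) := by
    funext u; congr 2; ring
  rw [h]; exact integrable_mul_exp_neg_mul_sq hc

private lemma my_int_exp (c : ℝ) (hc : 0 < c) :
    Integrable (fun u : ℝ => Real.exp (-(c*u^2))) := by
  have h : (fun u : ℝ => Real.exp (-(c*u^2))) = fun u => Real.exp (-c*u^2) := by
    funext u; congr 1; ring
  rw [h]; exact integrable_exp_neg_mul_sq hc

private lemma K1 (c s : ℝ) (hc : 0 < c) :
    ∫ u in Ioi s, u * Real.exp (-(c*u^2)) = Real.exp (-(c*s^2)) / (2*c) := by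
  have hderiv : ∀ x ∈ Ici s, HasDerivAt (fun u => -Real.exp (-(c*u^2)) / (2*c))
      (x * Real.exp (-(c*x^2))) x := by
    intro x _
    have h1 : HasDerivAt (fun u : ℝ => -(c*u^2)) (-(c*(2*x))) x := by
      have h0 := (((hasDerivAt_pow 2 x).const_mul c).neg); simp at h0; exact h0
    have h2 := (h1.exp.neg).div_const (2*c)
    refine HasDerivAt.congr_deriv h2 ?_
    rw [div_eq_iff (by positivity)]
    ring
  have htend : Tendsto (fun u : ℝ => -Real.exp (-(c*u^2)) / (2*c)) atTop (𝓝 0) := by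
    have h3 : Tendsto (fun u : ℝ => c*u^2) atTop atTop :=
      (tendsto_pow_atTop (by norm_num)).const_mul_atTop hc
    have h4 : Tendsto (fun u : ℝ => Real.exp (-(c*u^2))) atTop (𝓝 0) :=
      Real.tendsto_exp_atBot.comp (tendsto_neg_atBot_iff.mpr h3)
    simpa using (h4.neg.div_const (2*c))
  have := integral_Ioi_of_hasDerivAt_of_tendsto' hderiv
    ((my_int_mul c hc).integrableOn) htend
  rw [this]; field_simp; ring

private lemma K2 (c s : ℝ) (hc : 0 < c) :
    ∫ u in Ioi s, Real.exp (-(c*u^2))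
      = (Real.sqrt (2*c))⁻¹ * ∫ t in Ioi (Real.sqrt (2*c) * s), Real.exp (-t^2/2) := by
  have h2c : (0:ℝ) < 2*c := by linarith
  have h := integral_comp_mul_left_Ioi (fun t => Real.exp (-t^2/2)) s
    (Real.sqrt_pos.mpr h2c)
  have heq : (fun x : ℝ => Real.exp (-(Real.sqrt (2*c) * x)^2/2))
      = fun x => Real.exp (-(c*x^2)) := by
    funext x; congr 1
    rw [mul_pow, Real.sq_sqrt h2c.le]; ring
  rw [heq] at h
  rw [h, smul_eq_mul]

private lemma inner_integral (c d : ℝ) (hc : 0 < c) :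
    ∫ r in Ioi (0:ℝ), 2*c*r * Real.exp (-(c*r^2 + d*r))
      = 1 - d * (Real.sqrt (2*c))⁻¹ * Real.exp (d^2/(4*c))
          * ∫ t in Ioi (Real.sqrt (2*c) * (d/(2*c))), Real.exp (-t^2/2) := by
  have hcne : c ≠ 0 := hc.ne'
  set s := d/(2*c) with hs
  have key : (∫ r in Ioi (0:ℝ), 2*c*r * Real.exp (-(c*r^2 + d*r)))
      = Real.exp (d^2/(4*c)) * ∫ r in Ioi (0:ℝ),
          (fun u => 2*c*(u * Real.exp (-(c*u^2))) - d * Real.exp (-(c*u^2))) (r + s) := by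
    rw [← integral_const_mul]
    refine setIntegral_congr_fun measurableSet_Ioi fun r _ => ?_
    simp only
    have h1 : 2*c*(r+s) - d = 2*c*r := by rw [hs]; field_simp; ring
    have h2 : Real.exp (d^2/(4*c)) * Real.exp (-(c*(r+s)^2)) = Real.exp (-(c*r^2 + d*r)) := by
      rw [← Real.exp_add]; congr 1; rw [hs]; field_simp; ring
    calc 2*c*r * Real.exp (-(c*r^2 + d*r))
        = (2*c*(r+s) - d) * (Real.exp (d^2/(4*c)) * Real.exp (-(c*(r+s)^2))) := by
          rw [h1, h2]
      _ = Real.exp (d^2/(4*c)) * (2*c*((r+s) * Real.exp (-(c*(r+s)^2)))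
            - d * Real.exp (-(c*(r+s)^2))) := by ring
  rw [key, my_transl (fun u => 2*c*(u * Real.exp (-(c*u^2))) - d * Real.exp (-(c*u^2))) 0 s,
    zero_add]
  rw [integral_sub (((my_int_mul c hc).const_mul (2*c)).integrableOn)
    (((my_int_exp c hc).const_mul d).integrableOn),
    integral_const_mul _ _, integral_const_mul _ _, K1 c s hc, K2 c s hc]
  have e0 : Real.exp (d^2/(4*c)) * Real.exp (-(c*s^2)) = 1 := by
    rw [← Real.exp_add, show d^2/(4*c) + -(c*s^2) = 0 from by rw [hs]; field_simp; ring,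
      Real.exp_zero]
  have : Real.exp (d^2/(4*c)) * (2*c*(Real.exp (-(c*s^2))/(2*c))
      - d * ((Real.sqrt (2*c))⁻¹ * ∫ t in Ioi (Real.sqrt (2*c) * s), Real.exp (-t^2/2)))
      = Real.exp (d^2/(4*c)) * Real.exp (-(c*s^2))
        - d * (Real.sqrt (2*c))⁻¹ * Real.exp (d^2/(4*c))
          * ∫ t in Ioi (Real.sqrt (2*c) * s), Real.exp (-t^2/2) := by
    field_simp
  rw [this, e0]

end Aux

theorem stmt8 (lam v β ρ : ℝ) (hlam : 0 < lam) (hv : 0 ≤ v)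
    (hβ : β ∈ Set.Icc (0:ℝ) 1) (hρ : 0 < ρ)
    (Q : ℝ → ℝ)
    (hQ : ∀ x, Q x = (Real.sqrt (2*π))⁻¹ * ∫ t in Set.Ioi x, Real.exp (-t^2/2))
    (a : ℝ → ℝ) (ha : ∀ θ, a θ = 2*Real.cos θ*(π - θ) + Real.sin θ)
    (b' : ℝ → ℝ) (hb' : ∀ θ, b' θ = (v * a θ)/(2*π) * Real.sqrt (π*lam/(1+ρ))) :
    (1 - β)/(1 + ρ) + β * ((1/π) * ∫ θ in (0:ℝ)..π, (∫ r in Set.Ioi (0:ℝ),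
        Real.exp (-(π*lam*r^2*ρ)) * Real.exp (-(lam*(v^2*(π - θ) + r*v*(a θ))))
          * (2*π*lam*r) * Real.exp (-(π*lam*r^2))))
      = (1/(1+ρ)) * ((1 - β) + β * ((1/π) * ∫ θ in (0:ℝ)..π,
          (1 - 2*(b' θ)*Real.sqrt π * Real.exp ((b' θ)^2) * Q (Real.sqrt 2 * b' θ))
            * Real.exp (-(lam*v^2*(π - θ))))) := by
  have hπ : (0:ℝ) < π := Real.pi_pos
  have h1ρ : (0:ℝ) < 1 + ρ := by linarith
  set c : ℝ := π*lam*(1+ρ) with hcdef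
  have hc : 0 < c := by positivity
  have hsc : 0 < Real.sqrt c := Real.sqrt_pos.mpr hc
  have hscc : Real.sqrt c * Real.sqrt c = c := Real.mul_self_sqrt hc.le
  have h2c : Real.sqrt (2*c) = Real.sqrt 2 * Real.sqrt c := Real.sqrt_mul (by norm_num) c
  have h2π : Real.sqrt (2*π) = Real.sqrt 2 * Real.sqrt π := Real.sqrt_mul (by norm_num) π
  have hs2 : (0:ℝ) < Real.sqrt 2 := by positivity
  have hsπ : (0:ℝ) < Real.sqrt π := Real.sqrt_pos.mpr hπ
  clear_value c
  -- b' θ = d θ / (2 √c)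
  have hbd : ∀ θ, b' θ = lam*v*(a θ) / (2*Real.sqrt c) := by
    intro θ
    have key : Real.sqrt (π*lam/(1+ρ)) * Real.sqrt c = π*lam := by
      rw [← Real.sqrt_mul (by positivity), hcdef,
        show π*lam/(1+ρ)*(π*lam*(1+ρ)) = (π*lam)^2 from by field_simp]
      exact Real.sqrt_sq (by positivity)
    rw [eq_div_iff (by positivity), hb', div_mul_eq_mul_div, div_mul_eq_mul_div,
      div_eq_iff (by positivity : (2*π) ≠ 0)]
    linear_combination (2*v*(a θ)) * key
  -- inner integral computation for each θ
  have hInner : ∀ θ : ℝ, (∫ r in Set.Ioi (0:ℝ),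
        Real.exp (-(π*lam*r^2*ρ)) * Real.exp (-(lam*(v^2*(π - θ) + r*v*(a θ))))
          * (2*π*lam*r) * Real.exp (-(π*lam*r^2)))
      = (1/(1+ρ)) * ((1 - 2*(b' θ)*Real.sqrt π * Real.exp ((b' θ)^2) * Q (Real.sqrt 2 * b' θ))
          * Real.exp (-(lam*v^2*(π - θ)))) := by
    intro θ
    set d : ℝ := lam*v*(a θ) with hddef
    clear_value d
    have hpt : ∀ r : ℝ, Real.exp (-(π*lam*r^2*ρ)) * Real.exp (-(lam*(v^2*(π - θ) + r*v*(a θ))))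
          * (2*π*lam*r) * Real.exp (-(π*lam*r^2))
        = (Real.exp (-(lam*v^2*(π - θ)))/(1+ρ)) * (2*c*r * Real.exp (-(c*r^2 + d*r))) := by
      intro r
      have s1 : Real.exp (-(lam*(v^2*(π - θ) + r*v*(a θ))))
          = Real.exp (-(lam*v^2*(π - θ))) * Real.exp (-(lam*(r*v*(a θ)))) := by
        rw [← Real.exp_add]; congr 1; ring
      have s2 : Real.exp (-(c*r^2 + d*r)) = Real.exp (-(π*lam*r^2*ρ))
          * Real.exp (-(lam*(r*v*(a θ)))) * Real.exp (-(π*lam*r^2)) := by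
        rw [← Real.exp_add, ← Real.exp_add]; congr 1; rw [hcdef, hddef]; ring
      rw [s1, s2, hcdef]
      field_simp
    rw [setIntegral_congr_fun measurableSet_Ioi fun r _ => hpt r, integral_const_mul,
      inner_integral c d hc]
    have hA : Real.sqrt (2*c) * (d/(2*c)) = Real.sqrt 2 * b' θ := by
      rw [hbd θ, h2c, ← hddef]
      field_simp
      linear_combination d*hscc
    have hB : d^2/(4*c) = (b' θ)^2 := by
      rw [hbd θ, ← hddef, div_pow]
      congr 1
      rw [mul_pow]
      norm_num
      linear_combination (-1:ℝ)*hscc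
    have hC : d * (Real.sqrt (2*c))⁻¹ = 2 * b' θ * Real.sqrt π * (Real.sqrt (2*π))⁻¹ := by
      rw [hbd θ, ← hddef, h2c, h2π]
      field_simp
    rw [hA, hB, hC, hQ]
    field_simp
  -- outer assembly
  have houter : ∀ θ ∈ Set.uIcc (0:ℝ) π, (∫ r in Set.Ioi (0:ℝ),
        Real.exp (-(π*lam*r^2*ρ)) * Real.exp (-(lam*(v^2*(π - θ) + r*v*(a θ))))
          * (2*π*lam*r) * Real.exp (-(π*lam*r^2)))
      = (1/(1+ρ)) * ((1 - 2*(b' θ)*Real.sqrt π * Real.exp ((b' θ)^2) * Q (Real.sqrt 2 * b' θ))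
          * Real.exp (-(lam*v^2*(π - θ)))) := fun θ _ => hInner θ
  rw [intervalIntegral.integral_congr houter, intervalIntegral.integral_const_mul]
  ring
end

section
/- Subject to Σ_{k=1}^K A_k = 1 with A_k ≥ 0, the function Σ_{k=1}^K A_k/(1 + A_k ρ_k), with constants ρ_k > 0, is maximized at A_k* = (1/ρ_k)/(Σ_{j=1}^K 1/ρ_j), and the maximum value equals (Σ_k 1/ρ_k)/(1 + Σ_k 1/ρ_k). -/
lemma key_tangent (ρ S x : ℝ) (hρ : 0 < ρ) (hS : 0 < S) (hx : 0 ≤ x) :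
    x / (1 + x * ρ) ≤ ρ⁻¹ / (S + 1) ^ 2 + S ^ 2 / (S + 1) ^ 2 * x := by
  have h1 : (0:ℝ) < 1 + x * ρ := by positivity
  have hS1 : (0:ℝ) < (S + 1) ^ 2 := by positivity
  rw [div_le_iff₀ h1, div_add' _ _ _ hS1.ne', div_mul_eq_mul_div,
    le_div_iff₀ hS1]
  have h2 : S ^ 2 / (S + 1) ^ 2 * x * (S + 1) ^ 2 = S ^ 2 * x := by
    field_simp
  rw [h2]
  have h3 : x * ρ * ρ⁻¹ = x := by field_simp
  have h5 : ρ⁻¹ * (1 - S * x * ρ) ^ 2 = ρ⁻¹ - 2 * S * x + S ^ 2 * ρ * x ^ 2 := by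
    field_simp; ring
  have h6 : 0 ≤ ρ⁻¹ * (1 - S * x * ρ) ^ 2 := by positivity
  nlinarith [h3, h5, h6]

theorem stmt11 (K : ℕ) (hK : 1 ≤ K) (ρ : Fin K → ℝ) (hρ : ∀ k, 0 < ρ k)
    (Astar : Fin K → ℝ)
    (hAstar : ∀ k, Astar k = (ρ k)⁻¹ / ∑ j, (ρ j)⁻¹) :
    (∀ A : Fin K → ℝ, (∀ k, 0 ≤ A k) → (∑ k, A k) = 1 →
      ∑ k, A k / (1 + A k * ρ k) ≤ ∑ k, Astar k / (1 + Astar k * ρ k)) ∧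
    (∑ k, Astar k / (1 + Astar k * ρ k))
      = (∑ k, (ρ k)⁻¹) / (1 + ∑ k, (ρ k)⁻¹) := by
  set S : ℝ := ∑ j, (ρ j)⁻¹ with hSdef
  haveI : NeZero K := ⟨by omega⟩
  have hS : 0 < S := Finset.sum_pos (fun j _ => inv_pos.mpr (hρ j)) ⟨⟨0, by omega⟩, Finset.mem_univ _⟩
  have hterm : ∀ k, Astar k / (1 + Astar k * ρ k) = (ρ k)⁻¹ / (S + 1) := by
    intro k
    rw [hAstar k]
    have hρk := hρ k
    field_simp
  have hopt : ∑ k, Astar k / (1 + Astar k * ρ k) = S / (S + 1) := by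
    rw [Finset.sum_congr rfl (fun k _ => hterm k), ← Finset.sum_div]
  constructor
  · intro A hA hsum
    rw [hopt]
    calc ∑ k, A k / (1 + A k * ρ k)
        ≤ ∑ k, ((ρ k)⁻¹ / (S + 1) ^ 2 + S ^ 2 / (S + 1) ^ 2 * A k) :=
          Finset.sum_le_sum (fun k _ => key_tangent (ρ k) S (A k) (hρ k) hS (hA k))
      _ = S / (S + 1) ^ 2 + S ^ 2 / (S + 1) ^ 2 := by
          rw [Finset.sum_add_distrib, ← Finset.sum_div, ← Finset.mul_sum, hsum, mul_one]
      _ = S / (S + 1) := by field_simp; ring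
  · rw [hopt, add_comm]
end

section
/- Let A₁*, …, A_K* ∈ (0,1) with Σ_{k=1}^K A_k* = 1, and let a_{jk} > 0 for j,k ∈ {2,…,K} satisfy a_{jk} = 1/a_{kj} and a_{ik}·a_{kj} = a_{ij} for distinct indices (i.e., a_{jk} = c_j/c_k for some positive c_j). Then the (K−1)×(K−1) matrix A with diagonal entries 1 − (A_k*)⁻¹ and off-diagonal entries A_{k,j} = a_{jk} has determinant (−1)^{K−1}·(1 − Σ_{i=2}^K A_i*)/(∏_{i=2}^K A_i*). -/
theorem stmt13 (K : ℕ) (hK : 2 ≤ K) (A : Fin K → ℝ)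
    (hA : ∀ k, A k ∈ Set.Ioo (0:ℝ) 1) (hsum : ∑ k, A k = 1)
    (c : Fin (K-1) → ℝ) (hc : ∀ j, 0 < c j)
    (M : Matrix (Fin (K-1)) (Fin (K-1)) ℝ)
    (hM : ∀ k j, M k j = if k = j
        then 1 - (A ⟨k.1 + 1, by have := k.isLt; omega⟩)⁻¹
        else c j / c k) :
    M.det = (-1 : ℝ)^(K-1)
      * (1 - ∑ i : Fin (K-1), A ⟨i.1 + 1, by have := i.isLt; omega⟩)
      / ∏ i : Fin (K-1), A ⟨i.1 + 1, by have := i.isLt; omega⟩ := by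
  set B : Fin (K-1) → ℝ := fun i => A ⟨i.1 + 1, by have := i.isLt; omega⟩ with hB
  have hB0 : ∀ i, 0 < B i := fun i => (hA _).1
  have hBne : ∀ i, B i ≠ 0 := fun i => (hB0 i).ne'
  set d : Fin (K-1) → ℝ := fun i => -(B i)⁻¹ with hd
  have hdne : ∀ i, d i ≠ 0 := fun i => by
    simp only [hd, neg_ne_zero]
    exact inv_ne_zero (hBne i)
  set u : Fin (K-1) → ℝ := fun i => (d i)⁻¹ with hu
  set N : Matrix (Fin (K-1)) (Fin (K-1)) ℝ :=
    Matrix.diagonal d + Matrix.replicateCol Unit (fun _ => (1:ℝ)) * Matrix.replicateRow Unit (fun _ => (1:ℝ))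
    with hN
  have hMN : M = Matrix.diagonal (fun k => (c k)⁻¹) * N * Matrix.diagonal c := by
    ext k j
    rw [hM k j]
    simp only [hN, Matrix.mul_apply, Matrix.diagonal_apply, Matrix.add_apply,
      Matrix.replicateCol_apply, Matrix.replicateRow_apply]
    rw [Finset.sum_eq_single j (by intro b _ hb; simp [hb])
      (by intro h; exact absurd (Finset.mem_univ j) h)]
    rw [Finset.sum_eq_single k (by intro b _ hb; simp [Ne.symm hb]) 
      (by intro h; exact absurd (Finset.mem_univ k) h)]
    by_cases hkj : k = j
    · subst hkj
      simp only [if_pos rfl, hd, hB, ↓reduceIte, Finset.univ_unique, Finset.sum_singleton]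
      field_simp [(hc k).ne']
      ring
    · simp only [if_pos rfl, if_neg hkj, ↓reduceIte, Finset.univ_unique, Finset.sum_singleton, zero_add]
      field_simp
  have hNfact : N = Matrix.diagonal d *
      (1 + Matrix.replicateCol Unit u * Matrix.replicateRow Unit (fun _ => (1:ℝ))) := by
    rw [Matrix.mul_add, Matrix.mul_one, ← Matrix.mul_assoc, hN]
    congr 1
    ext k j
    simp only [Matrix.mul_apply, Matrix.diagonal_apply, Matrix.replicateCol_apply]
    rw [Finset.sum_eq_single k (by intro b _ hb; simp [Ne.symm hb]) (by simp)]
    simp [hu, mul_inv_cancel₀ (hdne k)]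
  have hdetN : N.det = (∏ i, d i) * (1 - ∑ i, B i) := by
    rw [hNfact, Matrix.det_mul, Matrix.det_diagonal,
      Matrix.det_one_add_replicateCol_mul_replicateRow]
    congr 1
    simp only [dotProduct, hu, hd, Pi.one_apply, one_mul, inv_neg, inv_inv]
    rw [Finset.sum_neg_distrib, sub_eq_add_neg]
  have hprodd : (∏ i, d i) = (-1:ℝ)^(K-1) * (∏ i, B i)⁻¹ := by
    calc (∏ i, d i) = ∏ i, (-1) * (B i)⁻¹ := by
          refine Finset.prod_congr rfl fun i _ => ?_
          simp [hd]
      _ = (-1:ℝ)^(K-1) * (∏ i, B i)⁻¹ := by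
          rw [Finset.prod_mul_distrib, Finset.prod_const, Finset.card_univ,
            Fintype.card_fin, ← Finset.prod_inv_distrib]
  have hprodBne : (∏ i, B i) ≠ 0 := Finset.prod_ne_zero_iff.mpr fun i _ => hBne i
  have hdet : M.det = N.det := by
    rw [hMN, Matrix.det_mul, Matrix.det_mul, Matrix.det_diagonal, Matrix.det_diagonal]
    have h1 : (∏ i, (c i)⁻¹) * (∏ i, c i) = 1 := by
      rw [← Finset.prod_mul_distrib]
      rw [Finset.prod_congr rfl (fun i _ => inv_mul_cancel₀ (hc i).ne')]
      simp
    calc (∏ i, (c i)⁻¹) * N.det * ∏ i, c i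
        = ((∏ i, (c i)⁻¹) * (∏ i, c i)) * N.det := by ring
      _ = N.det := by rw [h1, one_mul]
  rw [hdet, hdetN, hprodd]
  field_simp
end

section
/- The handoff rate for radial movement, H(v, λ) = 1 − e^{−λπv²} + 2vπ√λ·Q(v√(2πλ)), is strictly increasing in v for v > 0 (for fixed λ > 0) and strictly increasing in λ for λ > 0 (for fixed v > 0), and satisfies 0 ≤ H(v,λ) ≤ 1 with H(0,λ) = 0. -/
open Real MeasureTheory Set Filter Topology

private lemma gauss_cont : Continuous (fun t : ℝ => Real.exp (-t^2/2)) := by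
  exact (((continuous_pow 2).neg).div_const (2:ℝ)).rexp

private lemma gauss_int : Integrable (fun t : ℝ => Real.exp (-t^2/2)) := by
  have h := integrable_exp_neg_mul_sq (b := (1:ℝ)/2) (by norm_num)
  refine h.congr (Filter.Eventually.of_forall fun t => ?_)
  show Real.exp (-(1/2)*t^2) = Real.exp (-t^2/2)
  rw [show -(1/2:ℝ)*t^2 = -t^2/2 by ring]

private lemma gauss_mul_int : Integrable (fun t : ℝ => t * Real.exp (-t^2/2)) := by
  have h := integrable_mul_exp_neg_mul_sq (b := (1:ℝ)/2) (by norm_num)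
  refine h.congr (Filter.Eventually.of_forall fun t => ?_)
  show t * Real.exp (-(1/2)*t^2) = t * Real.exp (-t^2/2)
  rw [show -(1/2:ℝ)*t^2 = -t^2/2 by ring]

private lemma F_deriv (x : ℝ) :
    HasDerivAt (fun y => ∫ t in Set.Ioi y, Real.exp (-t^2/2)) (-(Real.exp (-x^2/2))) x := by
  have hint := gauss_int
  have key : ∀ y : ℝ, (∫ t in Set.Ioi y, Real.exp (-t^2/2))
      = ((∫ t, Real.exp (-t^2/2)) - ∫ t in Set.Iic 0, Real.exp (-t^2/2))
        - ∫ t in (0:ℝ)..y, Real.exp (-t^2/2) := by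
    intro y
    have h1 := intervalIntegral.integral_Iic_add_Ioi (b := y)
      hint.integrableOn hint.integrableOn
    have h2 := intervalIntegral.integral_Iic_sub_Iic (a := (0:ℝ)) (b := y)
      hint.integrableOn hint.integrableOn
    linarith
  have hd : HasDerivAt (fun y => ∫ t in (0:ℝ)..y, Real.exp (-t^2/2))
      (Real.exp (-x^2/2)) x := by
    exact intervalIntegral.integral_hasDerivAt_right hint.intervalIntegrable
      (gauss_cont.stronglyMeasurableAtFilter _ _) gauss_cont.continuousAt
  have := (hd.const_sub ((∫ t, Real.exp (-t^2/2)) - ∫ t in Set.Iic 0, Real.exp (-t^2/2)))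
  exact this.congr_of_eventuallyEq (Filter.Eventually.of_forall key)

private lemma F_pos (x : ℝ) : 0 < ∫ t in Set.Ioi x, Real.exp (-t^2/2) := by
  rw [setIntegral_pos_iff_support_of_nonneg_ae
    (Filter.Eventually.of_forall fun t => (Real.exp_pos _).le) gauss_int.integrableOn]
  have : Function.support (fun t : ℝ => Real.exp (-t^2/2)) = Set.univ := by
    ext t; simp [Function.support, Real.exp_ne_zero]
  rw [this, Set.univ_inter, Real.volume_Ioi]
  simp

private lemma tail_integral (x : ℝ) :
    ∫ t in Set.Ioi x, t * Real.exp (-t^2/2) = Real.exp (-x^2/2) := by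
  have hderiv : ∀ t ∈ Set.Ici x,
      HasDerivAt (fun t : ℝ => -Real.exp (-t^2/2)) (t * Real.exp (-t^2/2)) t := by
    intro t _
    have h1 : HasDerivAt (fun t : ℝ => -t^2/2) (-t) t := by
      have := ((hasDerivAt_pow 2 t).div_const 2).neg
      have h2 : (fun t : ℝ => -(t^2/2)) = fun t : ℝ => -t^2/2 := by
        funext s; ring
      replace this : HasDerivAt (fun t : ℝ => -(t^2/2)) _ t := this
      rw [h2] at this
      convert this using 1
      push_cast; ring
    have h3 := (h1.exp).neg
    refine h3.congr_deriv ?_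
    ring
  have htend : Tendsto (fun t : ℝ => -Real.exp (-t^2/2)) atTop (𝓝 0) := by
    rw [← neg_zero]
    refine Filter.Tendsto.neg ?_
    refine Real.tendsto_exp_atBot.comp ?_
    have h1 : Tendsto (fun t : ℝ => t^2/2) atTop atTop :=
      (tendsto_pow_atTop (two_ne_zero)).atTop_div_const (by norm_num)
    have := tendsto_neg_atTop_atBot.comp h1
    refine this.congr fun t => ?_
    simp [neg_div]
  have := integral_Ioi_of_hasDerivAt_of_tendsto' hderiv gauss_mul_int.integrableOn htend
  rw [this]; ring

private lemma F_le {x : ℝ} (hx : 0 < x) :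
    (∫ t in Set.Ioi x, Real.exp (-t^2/2)) ≤ Real.exp (-x^2/2) / x := by
  have hmono : (∫ t in Set.Ioi x, Real.exp (-t^2/2))
      ≤ ∫ t in Set.Ioi x, x⁻¹ * (t * Real.exp (-t^2/2)) := by
    refine setIntegral_mono_on gauss_int.integrableOn
      (gauss_mul_int.integrableOn.const_mul _) measurableSet_Ioi fun t ht => ?_
    have ht' : x < t := ht
    have h1 : (1:ℝ) ≤ t/x := (one_le_div hx).mpr ht'.le
    calc Real.exp (-t^2/2) = 1 * Real.exp (-t^2/2) := by ring
      _ ≤ (t/x) * Real.exp (-t^2/2) :=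
          mul_le_mul_of_nonneg_right h1 (Real.exp_pos _).le
      _ = x⁻¹ * (t * Real.exp (-t^2/2)) := by ring
  rw [MeasureTheory.integral_const_mul, tail_integral] at hmono
  calc (∫ t in Set.Ioi x, Real.exp (-t^2/2)) ≤ x⁻¹ * Real.exp (-x^2/2) := hmono
    _ = Real.exp (-x^2/2) / x := by ring

private noncomputable def Gfun : ℝ → ℝ := fun u =>
  Real.exp (-(π*u^2)) - 2*π*u*((Real.sqrt (2*π))⁻¹ *
    ∫ t in Set.Ioi (u*Real.sqrt (2*π)), Real.exp (-t^2/2))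

private lemma sq_arg (u : ℝ) : -(u*Real.sqrt (2*π))^2/2 = -(π*u^2) := by
  rw [mul_pow, Real.sq_sqrt (by positivity : (0:ℝ) ≤ 2*π)]; ring

private lemma G_hasDeriv (u : ℝ) :
    HasDerivAt Gfun
      (-(2*π*((Real.sqrt (2*π))⁻¹ *
        ∫ t in Set.Ioi (u*Real.sqrt (2*π)), Real.exp (-t^2/2)))) u := by
  have hq : HasDerivAt (fun u : ℝ => -(π*u^2)) (-(2*π*u)) u := by
    have := ((hasDerivAt_pow 2 u).const_mul π).neg
    refine this.congr_deriv ?_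
    push_cast; ring
  have h1 := hq.exp
  have hlin : HasDerivAt (fun u : ℝ => u * Real.sqrt (2*π)) (Real.sqrt (2*π)) u := by
    simpa using (hasDerivAt_id u).mul_const (Real.sqrt (2*π))
  have h2 := ((F_deriv (u*Real.sqrt (2*π))).comp u hlin).const_mul (Real.sqrt (2*π))⁻¹
  have h3 : HasDerivAt (fun u : ℝ => 2*π*u) (2*π) u := by
    simpa using (hasDerivAt_id u).const_mul (2*π)
  have h4 := h3.mul h2
  have h5 := h1.sub h4
  refine h5.congr_deriv ?_
  have hne : Real.sqrt (2*π) ≠ 0 := by positivity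
  rw [sq_arg u]
  simp only [Function.comp_apply]
  field_simp
  ring

private lemma G_strictAnti : StrictAnti Gfun := by
  refine strictAnti_of_deriv_neg fun u => ?_
  rw [(G_hasDeriv u).deriv]
  have h0 : 0 < (Real.sqrt (2*π))⁻¹ := by positivity
  have h1 := F_pos (u*Real.sqrt (2*π))
  have := mul_pos (by positivity : (0:ℝ) < 2*π) (mul_pos h0 h1)
  linarith

private lemma G_zero : Gfun 0 = 1 := by
  simp [Gfun]

private lemma G_nonneg {u : ℝ} (hu : 0 ≤ u) : 0 ≤ Gfun u := by
  rcases hu.eq_or_lt with h | h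
  · rw [← h, G_zero]; norm_num
  · have hx : 0 < u * Real.sqrt (2*π) := by positivity
    have hF := F_le hx
    have hc : (0:ℝ) ≤ 2*π*u*(Real.sqrt (2*π))⁻¹ := by positivity
    have hmul := mul_le_mul_of_nonneg_left hF hc
    have hne : Real.sqrt (2*π) ≠ 0 := by positivity
    have hs : Real.sqrt (2*π) * Real.sqrt (2*π) = 2*π :=
      Real.mul_self_sqrt (by positivity)
    have heq : 2*π*u*(Real.sqrt (2*π))⁻¹ *
        (Real.exp (-(u*Real.sqrt (2*π))^2/2)/(u*Real.sqrt (2*π)))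
        = Real.exp (-(π*u^2)) := by
      rw [sq_arg u]
      have hs2 : Real.sqrt 2 * Real.sqrt π * (Real.sqrt 2 * Real.sqrt π) = 2*π := by
        rw [show Real.sqrt 2 * Real.sqrt π = Real.sqrt (2*π) by
          rw [← Real.sqrt_mul (by norm_num) π]]
        exact hs
      field_simp
      linear_combination (-1:ℝ) * hs
    rw [heq] at hmul
    have : 2*π*u*((Real.sqrt (2*π))⁻¹ *
        ∫ t in Set.Ioi (u*Real.sqrt (2*π)), Real.exp (-t^2/2)) ≤ Real.exp (-(π*u^2)) := by
      calc 2*π*u*((Real.sqrt (2*π))⁻¹ *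
          ∫ t in Set.Ioi (u*Real.sqrt (2*π)), Real.exp (-t^2/2))
          = 2*π*u*(Real.sqrt (2*π))⁻¹ *
          (∫ t in Set.Ioi (u*Real.sqrt (2*π)), Real.exp (-t^2/2)) := by ring
        _ ≤ Real.exp (-(π*u^2)) := hmul
    simp only [Gfun]
    linarith


theorem stmt18 (Q : ℝ → ℝ)
    (hQ : ∀ x, Q x = (Real.sqrt (2*π))⁻¹ * ∫ t in Set.Ioi x, Real.exp (-t^2/2))
    (H : ℝ → ℝ → ℝ)
    (hH : ∀ v lam, H v lam
      = 1 - (Real.exp (-(lam*π*v^2)) - 2*v*π*Real.sqrt lam * Q (v*Real.sqrt (2*π*lam)))) :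
    (∀ lam : ℝ, 0 < lam → StrictMonoOn (fun v => H v lam) (Set.Ioi (0:ℝ))) ∧
    (∀ v : ℝ, 0 < v → StrictMonoOn (fun lam => H v lam) (Set.Ioi (0:ℝ))) ∧
    (∀ lam : ℝ, 0 < lam → ∀ v : ℝ, 0 ≤ v → 0 ≤ H v lam ∧ H v lam ≤ 1) ∧
    (∀ lam : ℝ, 0 < lam → H 0 lam = 0) := by
  have hHG : ∀ v lam : ℝ, 0 ≤ lam → H v lam = 1 - Gfun (v * Real.sqrt lam) := by
    intro v lam hlam
    have harg : v * Real.sqrt (2*π*lam) = v * Real.sqrt lam * Real.sqrt (2*π) := by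
      rw [show (2:ℝ)*π*lam = 2*π*lam from rfl, Real.sqrt_mul (by positivity : (0:ℝ) ≤ 2*π)]
      ring
    have hexp : -(lam*π*v^2) = -(π*(v*Real.sqrt lam)^2) := by
      rw [mul_pow, Real.sq_sqrt hlam]; ring
    rw [hH, hQ, harg, hexp]
    simp only [Gfun]
    ring
  refine ⟨?_, ?_, ?_, ?_⟩
  · intro lam hlam a _ b _ hab
    simp only
    rw [hHG a lam hlam.le, hHG b lam hlam.le]
    have : Gfun (b * Real.sqrt lam) < Gfun (a * Real.sqrt lam) :=
      G_strictAnti (mul_lt_mul_of_pos_right hab (Real.sqrt_pos.mpr hlam))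
    linarith
  · intro v hv a ha b _ hab
    simp only
    rw [hHG v a (le_of_lt ha), hHG v b (le_of_lt (ha.trans hab))]
    have hsq : Real.sqrt a < Real.sqrt b := Real.sqrt_lt_sqrt (le_of_lt ha) hab
    have : Gfun (v * Real.sqrt b) < Gfun (v * Real.sqrt a) :=
      G_strictAnti (mul_lt_mul_of_pos_left hsq hv)
    linarith
  · intro lam hlam v hv
    rw [hHG v lam hlam.le]
    have hu : (0:ℝ) ≤ v * Real.sqrt lam := by positivity
    have h1 : Gfun (v * Real.sqrt lam) ≤ 1 := by
      rw [← G_zero]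
      exact G_strictAnti.antitone hu
    have h2 := G_nonneg hu
    constructor <;> linarith
  · intro lam hlam
    rw [hHG 0 lam hlam.le]
    simp [G_zero]
end
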